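/- The dual cone of the exponential cone K_exp equals the topological closure of the set {(y₁,y₂,y₃) ∈ ℝ³ : y₁ > 0, y₃ < 0, y₁ ≥ −y₃·exp(y₂/y₃ − 1)}. -/

import Mathlib

open Real

/-- The exponential cone
`K_exp = {(x₁,x₂,x₃) : x₂ > 0, x₁ ≥ x₂·exp(x₃/x₂)} ∪ {(x₁,0,x₃) : x₁ ≥ 0, x₃ ≤ 0}`. -/
def Kexp : Set (Fin 3 → ℝ) :=
  {x | 0 < x 1 ∧ x 1 * Real.exp (x 2 / x 1) ≤ x 0} ∪
  {x | x 1 = 0 ∧ 0 ≤ x 0 ∧ x 2 ≤ 0}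

/-- The dual cone of `C ⊆ ℝ³` with respect to the standard inner product. -/
def dualCone (C : Set (Fin 3 → ℝ)) : Set (Fin 3 → ℝ) :=
  {y | ∀ x ∈ C, 0 ≤ y 0 * x 0 + y 1 * x 1 + y 2 * x 2}

lemma isClosed_dualCone (C : Set (Fin 3 → ℝ)) : IsClosed (dualCone C) := by
  have h : dualCone C = ⋂ x ∈ C, {y : Fin 3 → ℝ | 0 ≤ y 0 * x 0 + y 1 * x 1 + y 2 * x 2} := by
    ext y; simp [dualCone]
  rw [h]
  exact isClosed_biInter fun x _ => isClosed_le continuous_const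
    ((((continuous_apply 0).mul continuous_const).add
      ((continuous_apply 1).mul continuous_const)).add
      ((continuous_apply 2).mul continuous_const))

/-- key pointwise inequality -/
lemma key_ineq {a b c : ℝ} (hc : c < 0) (h : -c * Real.exp (b / c - 1) ≤ a) (t : ℝ) :
    0 ≤ a * Real.exp t + b + c * t := by
  have h1 : -c * Real.exp (b / c - 1) * Real.exp t ≤ a * Real.exp t :=
    mul_le_mul_of_nonneg_right h (Real.exp_pos t).le
  rw [mul_assoc, ← Real.exp_add] at h1
  have h2 : (t + b / c - 1) + 1 ≤ Real.exp (t + b / c - 1) := Real.add_one_le_exp _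
  have h3 : -c * (t + b / c) ≤ -c * Real.exp (t + b / c - 1) := by
    have := neg_pos.mpr hc
    nlinarith
  have hb : c * (b / c) = b := mul_div_cancel₀ b (ne_of_lt hc)
  have : b / c - 1 + t = t + b / c - 1 := by ring
  rw [this] at h1
  nlinarith [h1, h3]

/-- The dual cone of the exponential cone is the closure of
`{(y₁,y₂,y₃) : y₁ > 0, y₃ < 0, y₁ ≥ −y₃·exp(y₂/y₃ − 1)}`. -/
theorem dualCone_Kexp :
    dualCone Kexp =
      closure {y : Fin 3 → ℝ | 0 < y 0 ∧ y 2 < 0 ∧ -(y 2) * Real.exp (y 1 / y 2 - 1) ≤ y 0} := by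
  set D : Set (Fin 3 → ℝ) :=
    {y : Fin 3 → ℝ | 0 < y 0 ∧ y 2 < 0 ∧ -(y 2) * Real.exp (y 1 / y 2 - 1) ≤ y 0} with hD
  apply Set.Subset.antisymm
  · -- dualCone ⊆ closure D
    intro y hy
    -- basic facts
    have h100 : (![(1:ℝ),0,0] : Fin 3 → ℝ) ∈ Kexp := by
      right; simp
    have h00m : (![(0:ℝ),0,-1] : Fin 3 → ℝ) ∈ Kexp := by
      right; simp
    have hy0 : 0 ≤ y 0 := by
      have := hy _ h100; simpa using this
    have hy2 : y 2 ≤ 0 := by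
      have := hy _ h00m; simp at this; linarith
    have hexp : ∀ t : ℝ, 0 ≤ y 0 * Real.exp t + y 1 + y 2 * t := by
      intro t
      have hx : (![Real.exp t, 1, t] : Fin 3 → ℝ) ∈ Kexp := by
        left; simp
      have := hy _ hx
      simpa [mul_comm] using this
    rcases lt_or_eq_of_le hy2 with h2 | h2
    · -- y 2 < 0 : y ∈ D
      apply subset_closure
      set t : ℝ := 1 - y 1 / y 2 with ht
      have h1 := hexp t
      have hne : y 2 ≠ 0 := ne_of_lt h2
      have hbt : y 2 * t = y 2 - y 1 := by
        rw [ht, mul_sub, mul_one, mul_div_cancel₀ _ hne]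
      have h2' : -(y 2) ≤ y 0 * Real.exp t := by nlinarith
      have h3 : -(y 2) * Real.exp (y 1 / y 2 - 1) ≤ y 0 := by
        have hexpt : Real.exp (y 1 / y 2 - 1) = (Real.exp t)⁻¹ := by
          rw [← Real.exp_neg]; congr 1; rw [ht]; ring
        rw [hexpt]
        have hinv : Real.exp t * (Real.exp t)⁻¹ = 1 :=
          mul_inv_cancel₀ (ne_of_gt (Real.exp_pos t))
        nlinarith [mul_nonneg (sub_nonneg.mpr h2') (inv_pos.mpr (Real.exp_pos t)).le, hinv]
      have hy0pos : 0 < y 0 :=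
        lt_of_lt_of_le (mul_pos (by linarith) (Real.exp_pos _)) h3
      exact ⟨hy0pos, h2, h3⟩
    · -- y 2 = 0 : approximate
      have hy1 : 0 ≤ y 1 := by
        by_contra hneg
        push_neg at hneg
        have hy01 : 0 < y 0 + 1 := by linarith
        have hpos : 0 < -y 1 / (2 * (y 0 + 1)) := div_pos (by linarith) (by linarith)
        have h1 := hexp (Real.log (-y 1 / (2 * (y 0 + 1))))
        rw [Real.exp_log hpos, h2, zero_mul, add_zero] at h1
        have hcancel : -y 1 / (2 * (y 0 + 1)) * (2 * (y 0 + 1)) = -y 1 :=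
          div_mul_cancel₀ _ (by linarith)
        nlinarith [mul_nonneg h1 (by linarith : (0:ℝ) ≤ 2 * (y 0 + 1)), hcancel,
          mul_nonneg hy0 (neg_pos.mpr hneg).le]
      -- sequence
      have hmem : ∀ n : ℕ, (![y 0 + 1/(n+1), y 1, -(1/(n+1))] : Fin 3 → ℝ) ∈ D := by
        intro n
        have hn : (0:ℝ) < 1/((n:ℝ)+1) := by positivity
        refine ⟨by simp only [Matrix.cons_val_zero]; linarith,
          by simp only [Matrix.cons_val_two, Matrix.tail_cons, Matrix.head_cons]; linarith, ?_⟩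
        simp only [Matrix.cons_val_zero, Matrix.cons_val_one, Matrix.head_cons,
          Matrix.cons_val_two, Matrix.tail_cons, neg_neg]
        have hle : Real.exp (y 1 / -(1/(↑n+1)) - 1) ≤ 1 := by
          rw [Real.exp_le_one_iff]
          have : y 1 / -(1/((n:ℝ)+1)) ≤ 0 :=
            div_nonpos_of_nonneg_of_nonpos hy1 (by linarith)
          linarith
        nlinarith
      have htend : Filter.Tendsto
          (fun n : ℕ => (![y 0 + 1/(n+1), y 1, -(1/(n+1))] : Fin 3 → ℝ))
          Filter.atTop (nhds y) := by
        rw [tendsto_pi_nhds]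
        intro i
        fin_cases i
        · simpa using
            (tendsto_const_nhds.add tendsto_one_div_add_atTop_nhds_zero_nat : Filter.Tendsto
              (fun n : ℕ => y 0 + 1/(n+1)) Filter.atTop (nhds (y 0 + 0)))
        · simp only [Matrix.cons_val_one, Matrix.head_cons]
          exact tendsto_const_nhds
        · have h : Filter.Tendsto (fun n : ℕ => -(1/((n:ℝ)+1))) Filter.atTop (nhds (-0:ℝ)) :=
            tendsto_one_div_add_atTop_nhds_zero_nat.neg
          rw [neg_zero] at h
          simpa [h2] using h
      exact mem_closure_of_tendsto htend (Filter.Eventually.of_forall hmem)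
  · -- closure D ⊆ dualCone
    apply closure_minimal _ (isClosed_dualCone Kexp)
    rintro y ⟨hy0, hy2, hkey⟩ x hx
    rcases hx with ⟨hx1, hx0⟩ | ⟨hx1, hx0, hx2⟩
    · have ht := key_ineq hy2 hkey (x 2 / x 1)
      have hmul : 0 ≤ x 1 * (y 0 * Real.exp (x 2 / x 1) + y 1 + y 2 * (x 2 / x 1)) :=
        mul_nonneg hx1.le ht
      have hdiv : x 1 * (x 2 / x 1) = x 2 := mul_div_cancel₀ (x 2) (ne_of_gt hx1)
      have hxe : y 0 * (x 1 * Real.exp (x 2 / x 1)) ≤ y 0 * x 0 :=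
        mul_le_mul_of_nonneg_left hx0 hy0.le
      nlinarith
    · rw [hx1]
      nlinarith [mul_nonneg hy0.le hx0,
        mul_nonneg (neg_nonneg.mpr hy2.le) (neg_nonneg.mpr hx2)]
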